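/- Let F be a field, let c, d ∈ F, and let u₁, u₂ be nonzero elements of F. Set ū₁ = (d·u₂ + c)(u₂ + d)/(u₁u₂) and ū₂ = (ū₁ + c)/(u₂(ū₁ + 1)), and assume ū₁, ū₂ and ū₁ + 1 are nonzero. Then the rational function K₁(u₁,u₂) = (u₁ + d·u₂ + c)·((u₁+1)u₂ + d)/(u₁u₂) is invariant under the QRT map: K₁(ū₁,ū₂) = K₁(u₁,u₂). -/

import Mathlib

set_option maxHeartbeats 2000000


/-- The first integral `K₁(u₁,u₂) = (u₁ + d·u₂ + c)((u₁+1)u₂ + d)/(u₁u₂)`. -/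
noncomputable def K₁ {F : Type*} [Field F] (c d u₁ u₂ : F) : F :=
  (u₁ + d * u₂ + c) * ((u₁ + 1) * u₂ + d) / (u₁ * u₂)

theorem aux {F : Type*} [Field F] (c d u₁ u₂ : F)
    (h₁ : u₁ ≠ 0) (h₂ : u₂ ≠ 0)
    (hN : (d * u₂ + c) * (u₂ + d) ≠ 0)
    (hA : (d * u₂ + c) * (u₂ + d) + c * (u₁ * u₂) ≠ 0)
    (hB : (d * u₂ + c) * (u₂ + d) + u₁ * u₂ ≠ 0) :
    K₁ c d ((d * u₂ + c) * (u₂ + d) / (u₁ * u₂))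
        (((d * u₂ + c) * (u₂ + d) + c * (u₁ * u₂)) /
          (u₂ * ((d * u₂ + c) * (u₂ + d) + u₁ * u₂))) = K₁ c d u₁ u₂ := by
  unfold K₁
  field_simp
  have hB' : (d * u₂ + c) * (u₂ + d) + u₂ * u₁ ≠ 0 := by rwa [mul_comm u₂ u₁]
  have hA' : (d * u₂ + c) * (u₂ + d) + u₂ * c * u₁ ≠ 0 := by
    convert hA using 2; ring
  rw [div_eq_iff (mul_ne_zero hN hA')]
  field_simp
  ring

/-- the rational function `K₁` is invariant under the QRT map
`(u₁,u₂) ↦ (ū₁, ū₂)` with `ū₁ = (d·u₂+c)(u₂+d)/(u₁u₂)` and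
`ū₂ = (ū₁+c)/(u₂(ū₁+1))`. -/
theorem qrt_map_first_integral {F : Type*} [Field F] (c d u₁ u₂ : F)
    (h₁ : u₁ ≠ 0) (h₂ : u₂ ≠ 0)
    (hbar₁ : (d * u₂ + c) * (u₂ + d) / (u₁ * u₂) ≠ 0)
    (hbar₁' : (d * u₂ + c) * (u₂ + d) / (u₁ * u₂) + 1 ≠ 0)
    (hbar₂ : ((d * u₂ + c) * (u₂ + d) / (u₁ * u₂) + c) /
        (u₂ * ((d * u₂ + c) * (u₂ + d) / (u₁ * u₂) + 1)) ≠ 0) :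
    K₁ c d ((d * u₂ + c) * (u₂ + d) / (u₁ * u₂))
        (((d * u₂ + c) * (u₂ + d) / (u₁ * u₂) + c) /
          (u₂ * ((d * u₂ + c) * (u₂ + d) / (u₁ * u₂) + 1))) =
      K₁ c d u₁ u₂ := by
  have hD : u₁ * u₂ ≠ 0 := mul_ne_zero h₁ h₂
  have hN : (d * u₂ + c) * (u₂ + d) ≠ 0 := by
    intro h; exact hbar₁ (by rw [h, zero_div])
  have hB : (d * u₂ + c) * (u₂ + d) + u₁ * u₂ ≠ 0 := by
    intro h
    apply hbar₁'
    rw [div_add' _ _ _ hD, one_mul, h, zero_div]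
  have hA : (d * u₂ + c) * (u₂ + d) + c * (u₁ * u₂) ≠ 0 := by
    intro h
    apply hbar₂
    rw [div_eq_zero_iff]
    left
    rw [div_add' _ _ _ hD, h, zero_div]
  have hw : ((d * u₂ + c) * (u₂ + d) / (u₁ * u₂) + c) /
        (u₂ * ((d * u₂ + c) * (u₂ + d) / (u₁ * u₂) + 1)) =
      ((d * u₂ + c) * (u₂ + d) + c * (u₁ * u₂)) /
          (u₂ * ((d * u₂ + c) * (u₂ + d) + u₁ * u₂)) := by
    field_simp
  rw [hw]
  exact aux c d u₁ u₂ h₁ h₂ hN hA hB
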